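/- The sum MAMSE is non-increasing in the total transmit power: let A ∈ ℂ^{N×S}, let R ∈ ℂ^{N×N} be Hermitian positive semidefinite, let c ≥ 0 and σ² > 0. Then the function f : (0,∞) → ℝ defined by f(P) = tr((I_S + Aᴴ·(c·R + (σ²/P)·I_N)⁻¹·A)⁻¹) is monotone non-increasing: for all 0 < P₁ ≤ P₂, f(P₂) ≤ f(P₁). -/

import Mathlib

open Matrix ComplexOrder

namespace MAMSEAux

variable {n : Type*} [Fintype n] [DecidableEq n]

lemma smul_posSemidef {r : ℝ} (hr : 0 ≤ r) {M : Matrix n n ℂ} (hM : M.PosSemidef) :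
    (r • M).PosSemidef := by
  constructor
  · show (r • M)ᴴ = r • M
    rw [Matrix.conjTranspose_smul, star_trivial, hM.1.eq]
  · exact (hM.smul hr).2

lemma smul_one_posDef {r : ℝ} (hr : 0 < r) :
    (r • (1 : Matrix n n ℂ)).PosDef := by
  have h : r • (1 : Matrix n n ℂ) = Matrix.diagonal (fun _ => (r : ℂ)) := by
    ext i j
    by_cases h : i = j <;> simp [Matrix.one_apply, Matrix.diagonal, h]
  rw [h]
  exact Matrix.PosDef.diagonal (fun i => by exact_mod_cast hr)

lemma trace_re_nonneg {M : Matrix n n ℂ} (hM : M.PosSemidef) : 0 ≤ M.trace.re := by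
  have h : ∀ i, 0 ≤ M i i := fun i => hM.diag_nonneg
  have ht : M.trace.re = ∑ i, (M i i).re := by
    simp [Matrix.trace, Matrix.diag, Complex.re_sum]
  rw [ht]
  exact Finset.sum_nonneg fun i _ => (Complex.le_def.mp (h i)).1

open scoped MatrixOrder in
lemma inv_sub_one_posSemidef {B : Matrix n n ℂ} (hB : B.PosSemidef)
    (hd : IsUnit B.det) (h1 : ((1 : Matrix n n ℂ) - B).PosSemidef) :
    (B⁻¹ - 1).PosSemidef := by
  set S := CFC.sqrt B with hSdef
  have hSS : S * S = B := CFC.sqrt_mul_sqrt_self B hB.nonneg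
  have hSdet : IsUnit S.det := by
    have h2 : S.det * S.det = B.det := by rw [← Matrix.det_mul, hSS]
    exact isUnit_of_mul_isUnit_left (h2 ▸ hd)
  have hSh : (S⁻¹).IsHermitian := (CFC.sqrt_nonneg B).posSemidef.1.inv
  have key : B⁻¹ - 1 = (S⁻¹)ᴴ * ((1 : Matrix n n ℂ) - B) * S⁻¹ := by
    rw [hSh.eq, Matrix.mul_sub, Matrix.sub_mul, Matrix.mul_one, ← hSS,
      Matrix.mul_inv_rev]
    congr 1
    have e : S⁻¹ * (S * S) * S⁻¹ = (S⁻¹ * S) * (S * S⁻¹) := by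
      simp [Matrix.mul_assoc]
    rw [e, Matrix.nonsing_inv_mul _ hSdet, Matrix.mul_nonsing_inv _ hSdet, Matrix.one_mul]
  rw [key]
  exact h1.conjTranspose_mul_mul_same _

open scoped MatrixOrder in
lemma inv_sub_inv_posSemidef {M N : Matrix n n ℂ} (hN : N.PosDef)
    (hMN : (M - N).PosSemidef) : (N⁻¹ - M⁻¹).PosSemidef := by
  have hM : M.PosDef := by
    have := hN.add_posSemidef hMN
    rwa [add_sub_cancel] at this
  set T := CFC.sqrt M with hTdef
  have hTT : T * T = M := CFC.sqrt_mul_sqrt_self M hM.posSemidef.nonneg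
  have hMdet : IsUnit M.det := hM.isUnit.map (Matrix.detMonoidHom)
  have hTdet : IsUnit T.det := by
    have h2 : T.det * T.det = M.det := by rw [← Matrix.det_mul, hTT]
    exact isUnit_of_mul_isUnit_left (h2 ▸ hMdet)
  set X := T⁻¹ with hXdef
  have hXdet : IsUnit X.det := Matrix.isUnit_nonsing_inv_det T hTdet
  have hXh : X.IsHermitian := (CFC.sqrt_nonneg M).posSemidef.1.inv
  have hXinv : X⁻¹ = T := Matrix.nonsing_inv_nonsing_inv T hTdet
  have hXM : X * M * X = 1 := by
    rw [← hTT]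
    have e : X * (T * T) * X = (X * T) * (T * X) := by simp [Matrix.mul_assoc]
    rw [e, hXdef, Matrix.nonsing_inv_mul _ hTdet, Matrix.mul_nonsing_inv _ hTdet, Matrix.one_mul]
  set B := X * N * X with hBdef
  have hB : B.PosSemidef := by
    have := hN.posSemidef.conjTranspose_mul_mul_same X
    rwa [hXh.eq] at this
  have hNdet : IsUnit N.det := hN.isUnit.map (Matrix.detMonoidHom)
  have hBdet : IsUnit B.det := by
    rw [hBdef, Matrix.det_mul, Matrix.det_mul]
    exact (hXdet.mul hNdet).mul hXdet
  have h1B : ((1 : Matrix n n ℂ) - B).PosSemidef := by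
    have e : (1 : Matrix n n ℂ) - B = Xᴴ * (M - N) * X := by
      rw [hXh.eq, Matrix.mul_sub, Matrix.sub_mul, hXM, hBdef]
    rw [e]
    exact hMN.conjTranspose_mul_mul_same _
  have hstep := inv_sub_one_posSemidef hB hBdet h1B
  have e2 : N⁻¹ - M⁻¹ = Xᴴ * (B⁻¹ - 1) * X := by
    rw [hXh.eq, Matrix.mul_sub, Matrix.sub_mul, Matrix.mul_one]
    congr 1
    · rw [hBdef, Matrix.mul_inv_rev, Matrix.mul_inv_rev, hXinv]
      have e : X * (T * (N⁻¹ * T)) * X = (X * T) * N⁻¹ * (T * X) := by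
        simp [Matrix.mul_assoc]
      rw [e, hXdef, Matrix.nonsing_inv_mul _ hTdet, Matrix.mul_nonsing_inv _ hTdet,
        Matrix.one_mul, Matrix.mul_one]
    · rw [hXdef, ← Matrix.mul_inv_rev, hTT]
  rw [e2]
  exact hstep.conjTranspose_mul_mul_same _

end MAMSEAux

open MAMSEAux

/-- **The sum MAMSE is non-increasing in the total transmit power.** For `A ∈ ℂ^{N×S}`,
`R` Hermitian positive semidefinite, `c ≥ 0` and `σ² > 0`, the function
`P ↦ tr((I_S + Aᴴ (c R + (σ²/P) I_N)⁻¹ A)⁻¹)` is monotone non-increasing on `(0, ∞)`. -/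
theorem sum_MAMSE_nonincreasing_in_power {N S : ℕ} (hN : 0 < N) (hS : 0 < S)
    (A : Matrix (Fin N) (Fin S) ℂ)
    (R : Matrix (Fin N) (Fin N) ℂ) (hR : R.PosSemidef)
    (c σ2 : ℝ) (hc : 0 ≤ c) (hσ2 : 0 < σ2) :
    ∀ P₁ P₂ : ℝ, 0 < P₁ → P₁ ≤ P₂ →
      ((((1 : Matrix (Fin S) (Fin S) ℂ)
          + Aᴴ * (c • R + (σ2 / P₂) • (1 : Matrix (Fin N) (Fin N) ℂ))⁻¹ * A)⁻¹).trace).re ≤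
        ((((1 : Matrix (Fin S) (Fin S) ℂ)
          + Aᴴ * (c • R + (σ2 / P₁) • (1 : Matrix (Fin N) (Fin N) ℂ))⁻¹ * A)⁻¹).trace).re := by
  intro P₁ P₂ hP₁ hle
  have hP₂ : 0 < P₂ := lt_of_lt_of_le hP₁ hle
  set B₁ := c • R + (σ2 / P₁) • (1 : Matrix (Fin N) (Fin N) ℂ) with hB₁def
  set B₂ := c • R + (σ2 / P₂) • (1 : Matrix (Fin N) (Fin N) ℂ) with hB₂def
  have hcR : (c • R).PosSemidef := smul_posSemidef hc hR
  have hB₁ : B₁.PosDef := Matrix.PosDef.posSemidef_add hcR (smul_one_posDef (div_pos hσ2 hP₁))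
  have hB₂ : B₂.PosDef := Matrix.PosDef.posSemidef_add hcR (smul_one_posDef (div_pos hσ2 hP₂))
  have hdiff : (B₁ - B₂).PosSemidef := by
    have e : B₁ - B₂ = (σ2 / P₁ - σ2 / P₂) • (1 : Matrix (Fin N) (Fin N) ℂ) := by
      rw [hB₁def, hB₂def, add_sub_add_left_eq_sub, ← sub_smul]
    rw [e]
    refine smul_posSemidef ?_ (Matrix.PosSemidef.one)
    have : σ2 / P₂ ≤ σ2 / P₁ := by gcongr
    linarith
  have hBinv : (B₂⁻¹ - B₁⁻¹).PosSemidef := inv_sub_inv_posSemidef hB₂ hdiff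
  set D₁ := (1 : Matrix (Fin S) (Fin S) ℂ) + Aᴴ * B₁⁻¹ * A with hD₁def
  set D₂ := (1 : Matrix (Fin S) (Fin S) ℂ) + Aᴴ * B₂⁻¹ * A with hD₂def
  have hD₁ : D₁.PosDef :=
    Matrix.PosDef.one.add_posSemidef (hB₁.inv.posSemidef.conjTranspose_mul_mul_same A)
  have hDdiff : (D₂ - D₁).PosSemidef := by
    have e : D₂ - D₁ = Aᴴ * (B₂⁻¹ - B₁⁻¹) * A := by
      rw [hD₁def, hD₂def, add_sub_add_left_eq_sub, Matrix.mul_sub, Matrix.sub_mul]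
    rw [e]
    exact hBinv.conjTranspose_mul_mul_same A
  have hfinal : (D₁⁻¹ - D₂⁻¹).PosSemidef := inv_sub_inv_posSemidef hD₁ hDdiff
  have htr := trace_re_nonneg hfinal
  rw [Matrix.trace_sub, Complex.sub_re] at htr
  linarith
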